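/- Let n ≥ 3 and let a, b ∈ A_n be doubly pure. If b ∈ H_a then (a, ẽ_0, b) = 0 and (ẽ_0, a, b) = 0, while if b ∈ H_a^⊥ then (a, ẽ_0, b) = 2·ã·b and (ẽ_0, a, b) = −2·ã·b. -/

import Mathlib

noncomputable section

open scoped Quaternion

/-- The Cayley–Dickson algebra `A n = ℝ^(2^n)` as a type. -/
def CD : ℕ → Type
  | 0 => ℝ
  | n + 1 => CD n × CD n

namespace CD

instance instAddCommGroup : (n : ℕ) → AddCommGroup (CD n)
  | 0 => inferInstanceAs (AddCommGroup ℝ)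
  | n + 1 =>
    letI := instAddCommGroup n
    inferInstanceAs (AddCommGroup (CD n × CD n))

instance instModule : (n : ℕ) → Module ℝ (CD n)
  | 0 => inferInstanceAs (Module ℝ ℝ)
  | n + 1 =>
    letI := instModule n
    inferInstanceAs (Module ℝ (CD n × CD n))

/-- Conjugation in the Cayley–Dickson algebra. -/
def conj : {n : ℕ} → CD n → CD n
  | 0, x => x
  | _ + 1, x => (conj x.1, -x.2)

/-- Cayley–Dickson multiplication. -/
def mul : {n : ℕ} → CD n → CD n → CD n
  | 0, x, y => Mul.mul (α := ℝ) x y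
  | _ + 1, x, y =>
    (mul x.1 y.1 - mul (conj y.2) x.2, mul y.2 x.1 + mul x.2 (conj y.1))

instance instMul (n : ℕ) : Mul (CD n) := ⟨mul⟩

/-- The multiplicative unit `e₀`. -/
def one : {n : ℕ} → CD n
  | 0 => (1 : ℝ)
  | _ + 1 => (one, 0)

instance instOne (n : ℕ) : One (CD n) := ⟨one⟩

/-- The Euclidean inner product on `A n = ℝ^(2^n)`. -/
def inner : {n : ℕ} → CD n → CD n → ℝ
  | 0, x, y => (x * y : ℝ)
  | _ + 1, x, y => inner x.1 y.1 + inner x.2 y.2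

/-- The Euclidean norm on `A n = ℝ^(2^n)`. -/
def norm {n : ℕ} (x : CD n) : ℝ := Real.sqrt (inner x x)

/-- `ã = (-a₂, a₁)`. -/
def tilde {n : ℕ} (a : CD (n + 1)) : CD (n + 1) := (-a.2, a.1)

/-- `ẽ₀ = (0, e₀)`. -/
def etilde (n : ℕ) : CD (n + 1) := ((0 : CD n), (1 : CD n))

/-- An element is pure if its conjugate is its negative. -/
def IsPure {n : ℕ} (a : CD n) : Prop := conj a = -a

/-- An element of `A (n+1)` is doubly pure if both of its coordinates are pure. -/
def IsDoublyPure {n : ℕ} (a : CD (n + 1)) : Prop := IsPure a.1 ∧ IsPure a.2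

/-- The associator `(a,b,c) = (ab)c - a(bc)`. -/
def assoc {n : ℕ} (a b c : CD n) : CD n := a * b * c - a * (b * c)

/-- An element is alternative if `(a,a,x) = 0` for all `x`. -/
def IsAlternative {n : ℕ} (a : CD n) : Prop := ∀ x : CD n, assoc a a x = 0

/-- An element is strongly alternative if `(a,a,x) = 0` and `(a,x,x) = 0` for all `x`. -/
def IsStronglyAlternative {n : ℕ} (a : CD n) : Prop :=
  (∀ x : CD n, assoc a a x = 0) ∧ (∀ x : CD n, assoc a x x = 0)

/-- The pure (imaginary) part of an element. -/
def im {n : ℕ} (a : CD n) : CD n := (2⁻¹ : ℝ) • (a - conj a)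

/-- `H a`, the span of `{e₀, ã, a, ẽ₀}`. -/
def H {n : ℕ} (a : CD (n + 1)) : Submodule ℝ (CD (n + 1)) :=
  Submodule.span ℝ {(1 : CD (n + 1)), tilde a, a, etilde n}

/-- The orthogonal complement of `H a`. -/
def Hperp {n : ℕ} (a : CD (n + 1)) : Set (CD (n + 1)) :=
  {x | ∀ y ∈ H a, inner y x = 0}

end CD

namespace CD

variable {n : ℕ}

theorem ext {x y : CD (n+1)} (h1 : x.1 = y.1) (h2 : x.2 = y.2) : x = y := Prod.ext h1 h2

@[simp] theorem fst_add (x y : CD (n+1)) : (x + y).1 = x.1 + y.1 := rfl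
@[simp] theorem snd_add (x y : CD (n+1)) : (x + y).2 = x.2 + y.2 := rfl
@[simp] theorem fst_neg (x : CD (n+1)) : (-x).1 = -x.1 := rfl
@[simp] theorem snd_neg (x : CD (n+1)) : (-x).2 = -x.2 := rfl
@[simp] theorem fst_sub (x y : CD (n+1)) : (x - y).1 = x.1 - y.1 := rfl
@[simp] theorem snd_sub (x y : CD (n+1)) : (x - y).2 = x.2 - y.2 := rfl
@[simp] theorem fst_smul (r : ℝ) (x : CD (n+1)) : (r • x).1 = r • x.1 := rfl
@[simp] theorem snd_smul (r : ℝ) (x : CD (n+1)) : (r • x).2 = r • x.2 := rfl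
@[simp] theorem fst_zero : (0 : CD (n+1)).1 = 0 := rfl
@[simp] theorem snd_zero : (0 : CD (n+1)).2 = 0 := rfl
@[simp] theorem fst_one : (1 : CD (n+1)).1 = 1 := rfl
@[simp] theorem snd_one : (1 : CD (n+1)).2 = 0 := rfl
@[simp] theorem fst_mul (x y : CD (n+1)) : (x * y).1 = x.1 * y.1 - conj y.2 * x.2 := rfl
@[simp] theorem snd_mul (x y : CD (n+1)) : (x * y).2 = y.2 * x.1 + x.2 * conj y.1 := rfl
@[simp] theorem conj_fst (x : CD (n+1)) : (conj x).1 = conj x.1 := rfl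
@[simp] theorem conj_snd (x : CD (n+1)) : (conj x).2 = -x.2 := rfl
@[simp] theorem inner_succ (x y : CD (n+1)) : inner x y = inner x.1 y.1 + inner x.2 y.2 := rfl
@[simp] theorem etilde_fst : (etilde n).1 = 0 := rfl
@[simp] theorem etilde_snd : (etilde n).2 = 1 := rfl
@[simp] theorem tilde_fst (a : CD (n+1)) : (tilde a).1 = -a.2 := rfl
@[simp] theorem tilde_snd (a : CD (n+1)) : (tilde a).2 = a.1 := rfl


theorem conj_zero : ∀ {n : ℕ}, conj (0 : CD n) = 0
  | 0 => rfl
  | n + 1 => by have ih := conj_zero (n := n); apply ext <;> simp [ih]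

theorem conj_one : ∀ {n : ℕ}, conj (1 : CD n) = 1
  | 0 => rfl
  | n + 1 => by have ih := conj_one (n := n); apply ext <;> simp [ih]

theorem conj_add : ∀ {n : ℕ} (x y : CD n), conj (x + y) = conj x + conj y
  | 0, x, y => rfl
  | n + 1, x, y => by
    have ih : ∀ u v : CD n, conj (u + v) = conj u + conj v := fun u v => conj_add u v
    apply ext <;> simp [ih] <;> abel

theorem conj_neg : ∀ {n : ℕ} (x : CD n), conj (-x) = -conj x
  | 0, x => rfl
  | n + 1, x => by
    have ih : ∀ u : CD n, conj (-u) = -conj u := fun u => conj_neg u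
    apply ext <;> simp [ih]

theorem conj_smul : ∀ {n : ℕ} (r : ℝ) (x : CD n), conj (r • x) = r • conj x
  | 0, r, x => rfl
  | n + 1, r, x => by
    have ih : ∀ u : CD n, conj (r • u) = r • conj u := fun u => conj_smul r u
    apply ext <;> simp [ih]

theorem conj_conj : ∀ {n : ℕ} (x : CD n), conj (conj x) = x
  | 0, x => rfl
  | n + 1, x => by
    have ih : ∀ u : CD n, conj (conj u) = u := fun u => conj_conj u
    apply ext <;> simp [ih]

theorem conj_sub {n : ℕ} (x y : CD n) : conj (x - y) = conj x - conj y := by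
  rw [sub_eq_add_neg, conj_add, conj_neg, sub_eq_add_neg]

theorem mul_add_both : ∀ {n : ℕ}, (∀ x y z : CD n, (x + y) * z = x * z + y * z) ∧
    (∀ x y z : CD n, x * (y + z) = x * y + x * z)
  | 0 => ⟨fun x y z => by exact (fun (a b c : ℝ) => (by ring : (a + b) * c = a * c + b * c)) x y z,
          fun x y z => by exact (fun (a b c : ℝ) => (by ring : a * (b + c) = a * b + a * c)) x y z⟩
  | n + 1 => by
    obtain ⟨ih1, ih2⟩ := mul_add_both (n := n)
    constructor <;> intro x y z <;> apply ext <;>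
      simp [conj_add, ih1, ih2] <;> abel

theorem add_mul' {n : ℕ} (x y z : CD n) : (x + y) * z = x * z + y * z := mul_add_both.1 x y z
theorem mul_add' {n : ℕ} (x y z : CD n) : x * (y + z) = x * y + x * z := mul_add_both.2 x y z

theorem mul_zero_both : ∀ {n : ℕ}, (∀ x : CD n, (0 : CD n) * x = 0) ∧
    (∀ x : CD n, x * (0 : CD n) = 0)
  | 0 => ⟨fun x => by exact (fun (a : ℝ) => (by ring : (0:ℝ) * a = 0)) x, fun x => by exact (fun (a : ℝ) => (by ring : a * (0:ℝ) = 0)) x⟩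
  | n + 1 => by
    obtain ⟨ih1, ih2⟩ := mul_zero_both (n := n)
    constructor <;> intro x <;> apply ext <;> simp [conj_zero, ih1, ih2]

theorem zero_mul' {n : ℕ} (x : CD n) : (0 : CD n) * x = 0 := mul_zero_both.1 x
theorem mul_zero' {n : ℕ} (x : CD n) : x * (0 : CD n) = 0 := mul_zero_both.2 x

theorem mul_one_both : ∀ {n : ℕ}, (∀ x : CD n, (1 : CD n) * x = x) ∧
    (∀ x : CD n, x * (1 : CD n) = x)
  | 0 => ⟨fun x => by exact (fun (a : ℝ) => (by ring : (1:ℝ) * a = a)) x, fun x => by exact (fun (a : ℝ) => (by ring : a * (1:ℝ) = a)) x⟩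
  | n + 1 => by
    obtain ⟨ih1, ih2⟩ := mul_one_both (n := n)
    constructor <;> intro x <;> apply ext <;> simp [conj_zero, conj_one, ih1, ih2, mul_zero', zero_mul']

theorem one_mul' {n : ℕ} (x : CD n) : (1 : CD n) * x = x := mul_one_both.1 x
theorem mul_one' {n : ℕ} (x : CD n) : x * (1 : CD n) = x := mul_one_both.2 x

theorem neg_mul' {n : ℕ} (x y : CD n) : (-x) * y = -(x * y) := by
  have h : x * y + (-x) * y = 0 := by rw [← add_mul', add_neg_cancel, zero_mul']
  exact eq_neg_of_add_eq_zero_right h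

theorem mul_neg' {n : ℕ} (x y : CD n) : x * (-y) = -(x * y) := by
  have h : x * y + x * (-y) = 0 := by rw [← mul_add', add_neg_cancel, mul_zero']
  exact eq_neg_of_add_eq_zero_right h

theorem sub_mul' {n : ℕ} (x y z : CD n) : (x - y) * z = x * z - y * z := by
  rw [sub_eq_add_neg, add_mul', neg_mul', sub_eq_add_neg]

theorem mul_sub' {n : ℕ} (x y z : CD n) : x * (y - z) = x * y - x * z := by
  rw [sub_eq_add_neg, mul_add', mul_neg', sub_eq_add_neg]

theorem mul_smul_both : ∀ {n : ℕ}, (∀ (r : ℝ) (x y : CD n), (r • x) * y = r • (x * y)) ∧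
    (∀ (r : ℝ) (x y : CD n), x * (r • y) = r • (x * y))
  | 0 => ⟨fun r x y => by exact (fun (t : ℝ) (a b : ℝ) => (by rw [smul_eq_mul, smul_eq_mul]; ring : (t • a) * b = t • (a * b))) r x y,
          fun r x y => by exact (fun (t : ℝ) (a b : ℝ) => (by rw [smul_eq_mul, smul_eq_mul]; ring : a * (t • b) = t • (a * b))) r x y⟩
  | n + 1 => by
    obtain ⟨ih1, ih2⟩ := mul_smul_both (n := n)
    constructor <;> intro r x y <;> apply ext <;>
      simp [conj_smul, ih1, ih2, smul_sub, smul_add]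

theorem smul_mul' {n : ℕ} (r : ℝ) (x y : CD n) : (r • x) * y = r • (x * y) := mul_smul_both.1 r x y
theorem mul_smul' {n : ℕ} (r : ℝ) (x y : CD n) : x * (r • y) = r • (x * y) := mul_smul_both.2 r x y

theorem conj_mul' : ∀ {n : ℕ} (x y : CD n), conj (x * y) = conj y * conj x
  | 0, x, y => by exact (fun (a b : ℝ) => (by ring : a * b = b * a)) x y
  | n + 1, x, y => by
    have ih : ∀ u v : CD n, conj (u * v) = conj v * conj u := fun u v => conj_mul' u v
    apply ext <;> simp [conj_sub, conj_add, conj_neg, conj_conj, ih, neg_mul', mul_neg'] <;> abel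

theorem inner_neg_left : ∀ {n : ℕ} (x y : CD n), inner (-x) y = -inner x y
  | 0, x, y => by exact (fun (a b : ℝ) => (by ring : (-a) * b = -(a * b))) x y
  | n + 1, x, y => by
    have ih : ∀ u v : CD n, inner (-u) v = -inner u v := fun u v => inner_neg_left u v
    simp [ih]; ring

theorem conj_mul_add : ∀ {n : ℕ} (x y : CD n), conj x * y + conj y * x = (2 * inner x y) • (1 : CD n)
  | 0, x, y => by
    exact (fun (a b : ℝ) => (by rw [smul_eq_mul]; ring : a * b + b * a = (2 * (a * b)) • (1:ℝ))) x y
  | n + 1, x, y => by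
    apply ext
    · have h1 := conj_mul_add x.1 y.1
      have h2 := conj_mul_add x.2 y.2
      simp only [fst_add, fst_mul, conj_fst, conj_snd, fst_smul, fst_one, inner_succ,
        neg_mul', mul_neg', conj_neg, sub_neg_eq_add]
      rw [show (2 * (inner x.1 y.1 + inner x.2 y.2)) • (1 : CD n)
            = (2 * inner x.1 y.1) • (1 : CD n) + (2 * inner x.2 y.2) • (1 : CD n) by
          rw [← add_smul]; ring_nf]
      rw [← h1, ← h2]
      abel
    · simp only [snd_add, snd_mul, conj_fst, conj_snd, snd_smul, snd_one,
        neg_mul', mul_neg', smul_zero]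
      abel

theorem pure_mul_add {n : ℕ} {x y : CD n} (hx : IsPure x) (hy : IsPure y) :
    x * y + y * x = -((2 * inner x y) • (1 : CD n)) := by
  have h := conj_mul_add x y
  rw [hx, hy, neg_mul', neg_mul', ← neg_add] at h
  rw [← h, neg_neg]

theorem smul_one_eq_zero : ∀ {n : ℕ} {r : ℝ}, r • (1 : CD n) = 0 → r = 0
  | 0, r, h => by
    have h' : r • (1 : ℝ) = (0 : ℝ) := h
    simpa using h'
  | n + 1, r, h => by
    have h' : r • (1 : CD n) = 0 := congrArg (fun x : CD (n + 1) => x.1) h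
    exact smul_one_eq_zero h'

theorem assoc_add_right {n : ℕ} (x y u v : CD n) :
    assoc x y (u + v) = assoc x y u + assoc x y v := by
  simp only [assoc, mul_add']; abel

theorem assoc_smul_right {n : ℕ} (x y : CD n) (r : ℝ) (u : CD n) :
    assoc x y (r • u) = r • assoc x y u := by
  simp only [assoc, mul_smul', smul_sub]

theorem assoc_a_et_a {n : ℕ} {a : CD (n + 1)} (ha : IsDoublyPure a) :
    assoc a (etilde n) a = 0 := by
  have h1 : conj a.1 = -a.1 := ha.1
  have h2 : conj a.2 = -a.2 := ha.2
  apply ext <;>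
    simp [assoc, etilde_fst, etilde_snd, h1, h2, conj_zero, conj_one, conj_neg, conj_mul',
      mul_zero', zero_mul', one_mul', mul_one', neg_mul', mul_neg', mul_sub', sub_mul',
      mul_add', add_mul'] <;> abel

theorem assoc_a_et_ta {n : ℕ} {a : CD (n + 1)} (ha : IsDoublyPure a) :
    assoc a (etilde n) (tilde a) = 0 := by
  have h1 : conj a.1 = -a.1 := ha.1
  have h2 : conj a.2 = -a.2 := ha.2
  apply ext <;>
    simp [assoc, etilde_fst, etilde_snd, tilde_fst, tilde_snd, h1, h2, conj_zero, conj_one, conj_neg, conj_mul',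
      mul_zero', zero_mul', one_mul', mul_one', neg_mul', mul_neg', mul_sub', sub_mul',
      mul_add', add_mul'] <;> abel

theorem assoc_et_a_a {n : ℕ} {a : CD (n + 1)} (ha : IsDoublyPure a) :
    assoc (etilde n) a a = 0 := by
  have h1 : conj a.1 = -a.1 := ha.1
  have h2 : conj a.2 = -a.2 := ha.2
  apply ext <;>
    simp [assoc, etilde_fst, etilde_snd, h1, h2, conj_zero, conj_one, conj_neg, conj_mul', conj_add, conj_sub,
      mul_zero', zero_mul', one_mul', mul_one', neg_mul', mul_neg', mul_sub', sub_mul',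
      mul_add', add_mul'] <;> abel

theorem assoc_et_a_ta {n : ℕ} {a : CD (n + 1)} (ha : IsDoublyPure a) :
    assoc (etilde n) a (tilde a) = 0 := by
  have h1 : conj a.1 = -a.1 := ha.1
  have h2 : conj a.2 = -a.2 := ha.2
  apply ext <;>
    simp [assoc, etilde_fst, etilde_snd, tilde_fst, tilde_snd, h1, h2, conj_zero, conj_one, conj_neg, conj_mul', conj_add, conj_sub,
      mul_zero', zero_mul', one_mul', mul_one', neg_mul', mul_neg', mul_sub', sub_mul',
      mul_add', add_mul'] <;> abel

end CD

/-- For `n ≥ 3` and doubly pure `a, b`: if `b ∈ H a` then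
`(a, ẽ₀, b) = 0 = (ẽ₀, a, b)`, while if `b ∈ H a ^ ⊥` then
`(a, ẽ₀, b) = 2ãb` and `(ẽ₀, a, b) = −2ãb`. -/
theorem assoc_etilde_of_mem_H_or_Hperp (n : ℕ) (hn : 3 ≤ n + 1) (a b : CD (n + 1))
    (ha : CD.IsDoublyPure a) (hb : CD.IsDoublyPure b) :
    (b ∈ CD.H a → CD.assoc a (CD.etilde n) b = 0 ∧ CD.assoc (CD.etilde n) a b = 0) ∧
    (b ∈ CD.Hperp a →
      CD.assoc a (CD.etilde n) b = (2 : ℝ) • (CD.tilde a * b) ∧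
      CD.assoc (CD.etilde n) a b = -((2 : ℝ) • (CD.tilde a * b))) := by
  have ha1 : CD.conj a.1 = -a.1 := ha.1
  have ha2 : CD.conj a.2 = -a.2 := ha.2
  have hb1 : CD.conj b.1 = -b.1 := hb.1
  have hb2 : CD.conj b.2 = -b.2 := hb.2
  constructor
  · -- b ∈ H a
    intro hbH
    rw [CD.H, show ({(1 : CD (n+1)), CD.tilde a, a, CD.etilde n} : Set (CD (n+1)))
        = insert 1 (insert (CD.tilde a) (insert a {CD.etilde n})) from rfl,
      Submodule.mem_span_insert] at hbH
    obtain ⟨c1, z1, hz1, hbe⟩ := hbH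
    rw [Submodule.mem_span_insert] at hz1
    obtain ⟨c2, z2, hz2, rfl⟩ := hz1
    rw [Submodule.mem_span_insert] at hz2
    obtain ⟨c3, z3, hz3, rfl⟩ := hz2
    rw [Submodule.mem_span_singleton] at hz3
    obtain ⟨c4, rfl⟩ := hz3
    have hc1 : c1 = 0 := by
      have hp : CD.conj b.1 + b.1 = (2 * c1) • (1 : CD n) := by
        rw [hbe]
        simp [CD.tilde_fst, CD.tilde_snd, CD.etilde_fst, CD.etilde_snd, CD.conj_add, CD.conj_smul, CD.conj_one, CD.conj_neg,
          CD.conj_zero, ha1, ha2, two_mul, add_smul, smul_neg]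
        abel
      rw [hb1, neg_add_cancel] at hp
      have := CD.smul_one_eq_zero hp.symm
      linarith
    have hc4 : c4 = 0 := by
      have hp : CD.conj b.2 + b.2 = (2 * c4) • (1 : CD n) := by
        rw [hbe]
        simp [CD.tilde_fst, CD.tilde_snd, CD.etilde_fst, CD.etilde_snd, CD.conj_add, CD.conj_smul, CD.conj_one, CD.conj_neg,
          CD.conj_zero, ha1, ha2, two_mul, add_smul, smul_neg]
        abel
      rw [hb2, neg_add_cancel] at hp
      have := CD.smul_one_eq_zero hp.symm
      linarith
    have hbeq : b = c2 • CD.tilde a + c3 • a := by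
      rw [hbe, hc1, hc4]
      simp
    constructor
    · rw [hbeq, CD.assoc_add_right, CD.assoc_smul_right, CD.assoc_smul_right,
        CD.assoc_a_et_ta ha, CD.assoc_a_et_a ha]
      simp
    · rw [hbeq, CD.assoc_add_right, CD.assoc_smul_right, CD.assoc_smul_right,
        CD.assoc_et_a_ta ha, CD.assoc_et_a_a ha]
      simp
  · -- b ∈ Hperp a
    intro hbp
    have hA : CD.inner a b = 0 := hbp a (Submodule.subset_span (by simp))
    have hT : CD.inner (CD.tilde a) b = 0 := hbp (CD.tilde a) (Submodule.subset_span (by simp))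
    have hA' : CD.inner a.1 b.1 + CD.inner a.2 b.2 = 0 := hA
    have hT' : CD.inner a.1 b.2 = CD.inner a.2 b.1 := by
      have h : CD.inner (-a.2) b.1 + CD.inner a.1 b.2 = 0 := hT
      rw [CD.inner_neg_left] at h
      linarith
    have hE : CD.inner a.2 b.2 = -CD.inner a.1 b.1 := by linarith
    set c := CD.inner a.2 b.1 with hc
    set d := CD.inner a.1 b.1 with hd
    have h1 : a.1 * b.2 = -((2 * c) • (1 : CD n)) - b.2 * a.1 := by
      have h := CD.pure_mul_add ha.1 hb.2
      rw [hT'] at h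
      exact eq_sub_of_add_eq h
    have h2 : a.2 * b.1 = -((2 * c) • (1 : CD n)) - b.1 * a.2 := by
      have h := CD.pure_mul_add ha.2 hb.1
      exact eq_sub_of_add_eq h
    have h3 : a.1 * b.1 = -((2 * d) • (1 : CD n)) - b.1 * a.1 := by
      have h := CD.pure_mul_add ha.1 hb.1
      exact eq_sub_of_add_eq h
    have h4 : a.2 * b.2 = (2 * d) • (1 : CD n) - b.2 * a.2 := by
      have h := CD.pure_mul_add ha.2 hb.2
      rw [hE] at h
      have h' : a.2 * b.2 + b.2 * a.2 = (2 * d) • (1 : CD n) := by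
        rw [h]; module
      exact eq_sub_of_add_eq h'
    constructor
    · apply CD.ext <;>
        simp only [CD.assoc, CD.fst_mul, CD.snd_mul, CD.fst_sub, CD.snd_sub, CD.fst_smul,
          CD.snd_smul, CD.etilde_fst, CD.etilde_snd, CD.conj_zero, CD.conj_one, CD.conj_neg, CD.conj_mul',
          CD.conj_add, CD.conj_sub, CD.tilde_fst, CD.tilde_snd, ha1, ha2, hb1, hb2,
          CD.mul_zero', CD.zero_mul', CD.one_mul', CD.mul_one', CD.neg_mul', CD.mul_neg',
          CD.mul_sub', CD.sub_mul', CD.mul_add', CD.add_mul', neg_neg, sub_neg_eq_add] <;>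
        simp only [h1, h2, h3, h4] <;> module
    · apply CD.ext <;>
        simp only [CD.assoc, CD.fst_mul, CD.snd_mul, CD.fst_sub, CD.snd_sub, CD.fst_smul,
          CD.snd_smul, CD.fst_neg, CD.snd_neg, CD.etilde_fst, CD.etilde_snd, CD.conj_zero, CD.conj_one,
          CD.conj_neg, CD.conj_mul', CD.conj_add, CD.conj_sub, CD.tilde_fst, CD.tilde_snd, ha1, ha2, hb1, hb2,
          CD.mul_zero', CD.zero_mul', CD.one_mul', CD.mul_one', CD.neg_mul', CD.mul_neg',
          CD.mul_sub', CD.sub_mul', CD.mul_add', CD.add_mul', neg_neg, sub_neg_eq_add] <;>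
        simp only [h1, h2, h3, h4] <;> module
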